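/- Let Q ∈ ℂ^{N_T×N_T} be positive semi-definite and η > 0, and define R : ℂ^{N_S×N_S} → ℝ (viewing ℂ^{N_S×N_S} as a real vector space) by R(Θ) = log det(I + (1/η)·H(Θ)·Q·H(Θ)ᴴ), where H(Θ) = H_D + H_B·Θ·H_F (the determinant is a real number ≥ 1 since the matrix is positive definite Hermitian). Then R is Fréchet differentiable over ℝ at every Θ, and its derivative in the direction Δ ∈ ℂ^{N_S×N_S} equals (2/η)·Re tr( Δᴴ · H_Bᴴ · (I + (1/η)·H(Θ)·Q·H(Θ)ᴴ)⁻¹ · H(Θ) · Q · H_Fᴴ ). -/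

import Mathlib

open Matrix
open scoped ComplexOrder

attribute [local instance] Matrix.normedAddCommGroup Matrix.normedSpace

namespace Stmt17Aux

variable {n : Type*} [Fintype n] [DecidableEq n]

lemma det_norm_bound (v : n → (n → ℂ)) :
    ‖(Matrix.detRowAlternating (R := ℂ) (n := n)).toMultilinearMap v‖ ≤
      ((Fintype.card n).factorial : ℝ) * ∏ i, ‖v i‖ := by
  have hv : (Matrix.detRowAlternating (R := ℂ) (n := n)).toMultilinearMap v
      = (Matrix.of v).det := rfl
  rw [hv, Matrix.det_apply]
  refine (norm_sum_le _ _).trans ?_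
  have hterm : ∀ σ : Equiv.Perm n,
      ‖Equiv.Perm.sign σ • ∏ i, (Matrix.of v) (σ i) i‖ ≤ ∏ i, ‖v i‖ := by
    intro σ
    have h1 : ‖Equiv.Perm.sign σ • ∏ i, (Matrix.of v) (σ i) i‖
        = ‖∏ i, (Matrix.of v) (σ i) i‖ := by
      rcases Int.units_eq_one_or (Equiv.Perm.sign σ) with h | h <;>
        simp [h, Units.smul_def]
    rw [h1, norm_prod]
    calc ∏ i, ‖(Matrix.of v) (σ i) i‖ ≤ ∏ i, ‖v (σ i)‖ := by
          refine Finset.prod_le_prod (fun i _ => norm_nonneg _) (fun i _ => ?_)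
          exact norm_le_pi_norm (v (σ i)) i
      _ = ∏ i, ‖v i‖ := Equiv.prod_comp σ (fun i => ‖v i‖)
  calc ∑ σ : Equiv.Perm n, ‖Equiv.Perm.sign σ • ∏ i, (Matrix.of v) (σ i) i‖
      ≤ ∑ _σ : Equiv.Perm n, ∏ i, ‖v i‖ := Finset.sum_le_sum (fun σ _ => hterm σ)
    _ = ((Fintype.card n).factorial : ℝ) * ∏ i, ‖v i‖ := by
        rw [Finset.sum_const, Finset.card_univ, Fintype.card_perm, nsmul_eq_mul]

/-- The determinant as a continuous multilinear map in the rows. -/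
noncomputable def detCont (n : Type*) [Fintype n] [DecidableEq n] :
    ContinuousMultilinearMap ℂ (fun _ : n => (n → ℂ)) ℂ :=
  MultilinearMap.mkContinuous (Matrix.detRowAlternating (R := ℂ)).toMultilinearMap
    ((Fintype.card n).factorial) (fun v => det_norm_bound v)

lemma detCont_apply (v : n → (n → ℂ)) : detCont n v = (Matrix.of v).det := rfl

/-- The map `Matrix → Pi` as a continuous linear map (it is essentially the identity). -/
noncomputable def toPiCLM (n : Type*) [Fintype n] [DecidableEq n] :
    Matrix n n ℂ →L[ℂ] (∀ _ : n, n → ℂ) :=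
  LinearMap.toContinuousLinearMap
    { toFun := fun A i => A i
      map_add' := fun A B => rfl
      map_smul' := fun c A => rfl }

lemma toPiCLM_apply (A : Matrix n n ℂ) (i : n) : toPiCLM n A i = A i := rfl

/-- The derivative of the determinant. -/
noncomputable def detDeriv (A : Matrix n n ℂ) : Matrix n n ℂ →L[ℂ] ℂ :=
  LinearMap.toContinuousLinearMap
    { toFun := fun E => Matrix.trace (A.adjugate * E)
      map_add' := fun E F => by simp [Matrix.mul_add]
      map_smul' := fun c E => by simp [Matrix.mul_smul] }

lemma detDeriv_apply (A E : Matrix n n ℂ) :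
    detDeriv A E = Matrix.trace (A.adjugate * E) := rfl

lemma sum_det_updateRow (A E : Matrix n n ℂ) :
    ∑ i, (A.updateRow i (E i)).det = Matrix.trace (A.adjugate * E) := by
  have h : ∀ i, (A.updateRow i (E i)).det = ∑ j, A.adjugate j i * E i j := by
    intro i
    rw [← Matrix.cramer_transpose_apply, Matrix.cramer_eq_adjugate_mulVec,
      ← Matrix.adjugate_transpose]
    simp [Matrix.mulVec, dotProduct, Matrix.transpose_apply]
  simp_rw [h, Matrix.trace, Matrix.diag, Matrix.mul_apply]
  rw [Finset.sum_comm]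

theorem hasFDerivAt_det (A : Matrix n n ℂ) :
    HasFDerivAt Matrix.det (detDeriv A) A := by
  have h0 := (detCont n).hasFDerivAt (x := toPiCLM n A)
  have h := h0.comp A (toPiCLM n).hasFDerivAt
  have hfun : ⇑(detCont n) ∘ ⇑(toPiCLM n) = Matrix.det := by
    funext B; rfl
  have hlin : ((detCont n).linearDeriv (toPiCLM n A)).comp (toPiCLM n) = detDeriv A := by
    refine ContinuousLinearMap.ext fun E => ?_
    rw [ContinuousLinearMap.comp_apply, ContinuousMultilinearMap.linearDeriv_apply,
      detDeriv_apply, ← sum_det_updateRow A E]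
    refine Finset.sum_congr rfl fun i _ => ?_
    rfl
  rw [hfun] at h
  exact h.congr_fderiv hlin

variable {l m p : Type*} [Fintype l] [Fintype m] [Fintype p]

theorem isBoundedBilinearMap_mul :
    IsBoundedBilinearMap ℝ (fun z : Matrix l m ℂ × Matrix m p ℂ => z.1 * z.2) where
  add_left x₁ x₂ y := Matrix.add_mul x₁ x₂ y
  smul_left c x y := Matrix.smul_mul c x y
  add_right x y₁ y₂ := Matrix.mul_add x y₁ y₂
  smul_right c x y := Matrix.mul_smul x c y
  bound := by
    refine ⟨(Fintype.card m : ℝ) + 1, by positivity, fun X Y => ?_⟩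
    rw [Matrix.norm_le_iff (by positivity)]
    intro i j
    calc ‖(X * Y) i j‖ = ‖∑ k, X i k * Y k j‖ := by rw [Matrix.mul_apply]
      _ ≤ ∑ k, ‖X i k * Y k j‖ := norm_sum_le _ _
      _ ≤ ∑ _k : m, ‖X‖ * ‖Y‖ := by
          refine Finset.sum_le_sum fun k _ => ?_
          rw [norm_mul]
          exact mul_le_mul (Matrix.norm_entry_le_entrywise_sup_norm X)
            (Matrix.norm_entry_le_entrywise_sup_norm Y) (norm_nonneg _) (norm_nonneg _)
      _ = (Fintype.card m : ℝ) * (‖X‖ * ‖Y‖) := by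
          rw [Finset.sum_const, Finset.card_univ, nsmul_eq_mul]
      _ ≤ ((Fintype.card m : ℝ) + 1) * ‖X‖ * ‖Y‖ := by
          rw [mul_assoc]
          have : (0:ℝ) ≤ ‖X‖ * ‖Y‖ := by positivity
          nlinarith
theorem _root_.HasFDerivAt.matmul {X : Type*} [NormedAddCommGroup X] [NormedSpace ℝ X]
    {f : X → Matrix l m ℂ} {g : X → Matrix m p ℂ}
    {f' : X →L[ℝ] Matrix l m ℂ} {g' : X →L[ℝ] Matrix m p ℂ} {x : X}
    (hf : HasFDerivAt f f' x) (hg : HasFDerivAt g g' x) :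
    HasFDerivAt (fun x => f x * g x)
      ((isBoundedBilinearMap_mul.deriv (f x, g x)).comp (f'.prod g')) x := by
  have h := ((isBoundedBilinearMap_mul (l := l) (m := m) (p := p)).hasFDerivAt
    (f x, g x)).comp x (hf.prodMk hg)
  exact h

lemma matmul_deriv_apply
    (a : Matrix l m ℂ) (b : Matrix m p ℂ) (q : Matrix l m ℂ × Matrix m p ℂ) :
    (isBoundedBilinearMap_mul.deriv (a, b)) q = a * q.2 + q.1 * b := by
  rw [IsBoundedBilinearMap.deriv_apply]

/-- Conjugate transpose as a real-continuous-linear map. -/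
noncomputable def ctCLM (l m : Type*) [Fintype l] [Fintype m] :
    Matrix l m ℂ →L[ℝ] Matrix m l ℂ :=
  LinearMap.toContinuousLinearMap
    { toFun := fun A => Aᴴ
      map_add' := fun A B => Matrix.conjTranspose_add A B
      map_smul' := fun c A => by
        simp }

lemma ctCLM_apply (A : Matrix l m ℂ) : ctCLM l m A = Aᴴ := rfl

lemma psd_smul {k : Type*} [Fintype k] {c : ℝ} (hc : 0 ≤ c) {A : Matrix k k ℂ}
    (hA : A.PosSemidef) : ((c : ℂ) • A).PosSemidef := by
  constructor
  · show ((c : ℂ) • A)ᴴ = (c : ℂ) • A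
    rw [Matrix.conjTranspose_smul, hA.1]
    congr 1
    simp [Complex.star_def, Complex.conj_ofReal]
  · intro x
    have hs : (x.sum fun i xi => x.sum fun j xj => star xi * ((c:ℂ) • A) i j * xj)
        = (c:ℂ) * x.sum fun i xi => x.sum fun j xj => star xi * A i j * xj := by
      simp only [Finsupp.sum, Finset.mul_sum, Matrix.smul_apply, smul_eq_mul]
      exact Finset.sum_congr rfl fun i _ => Finset.sum_congr rfl fun j _ => by ring
    rw [hs]
    have h0 : (0:ℂ) ≤ (c:ℂ) := by exact_mod_cast hc
    exact mul_nonneg h0 (hA.2 x)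

end Stmt17Aux

open Stmt17Aux

theorem stmt17 {N_T N_R N_S : ℕ}
    (H_D : Matrix (Fin N_R) (Fin N_T) ℂ)
    (H_B : Matrix (Fin N_R) (Fin N_S) ℂ)
    (H_F : Matrix (Fin N_S) (Fin N_T) ℂ)
    (Q : Matrix (Fin N_T) (Fin N_T) ℂ) (hQ : Q.PosSemidef)
    (η : ℝ) (hη : 0 < η)
    (H : Matrix (Fin N_S) (Fin N_S) ℂ → Matrix (Fin N_R) (Fin N_T) ℂ)
    (hH : ∀ Θ, H Θ = H_D + H_B * Θ * H_F)
    (R : Matrix (Fin N_S) (Fin N_S) ℂ → ℝ)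
    (hR : ∀ Θ, R Θ =
      Real.log ((1 + (η⁻¹ : ℂ) • (H Θ * Q * (H Θ)ᴴ)).det).re) :
    ∀ Θ : Matrix (Fin N_S) (Fin N_S) ℂ,
      ∃ f' : Matrix (Fin N_S) (Fin N_S) ℂ →L[ℝ] ℝ,
        HasFDerivAt R f' Θ ∧
        ∀ Δ : Matrix (Fin N_S) (Fin N_S) ℂ,
          f' Δ = (2 / η) *
            (Matrix.trace (Δᴴ * (H_Bᴴ *
              (1 + (η⁻¹ : ℂ) • (H Θ * Q * (H Θ)ᴴ))⁻¹ * H Θ * Q * H_Fᴴ))).re := by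
  intro Θ
  have hRfun : R = fun Θ => Real.log ((1 + (η⁻¹ : ℂ) • (H Θ * Q * (H Θ)ᴴ)).det).re :=
    funext hR
  -- the linear map Δ ↦ H_B * Δ * H_F
  set BL : Matrix (Fin N_S) (Fin N_S) ℂ →L[ℝ] Matrix (Fin N_R) (Fin N_T) ℂ :=
    LinearMap.toContinuousLinearMap
      { toFun := fun Δ => H_B * Δ * H_F
        map_add' := fun X Y => by simp [Matrix.mul_add, Matrix.add_mul]
        map_smul' := fun c X => by simp [Matrix.mul_smul, Matrix.smul_mul] } with hBLdef
  have hBLapply : ∀ Δ, BL Δ = H_B * Δ * H_F := fun Δ => rfl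
  have hHd : HasFDerivAt H BL Θ := by
    have hfun : H = fun Θ' => H_D + BL Θ' := by
      funext Θ'; rw [hH Θ']; rfl
    rw [hfun]
    exact BL.hasFDerivAt.const_add H_D
  have h1 := hHd.matmul (hasFDerivAt_const Q Θ)
  have h2 : HasFDerivAt (fun Θ' => (H Θ')ᴴ)
      ((ctCLM (Fin N_R) (Fin N_T)).comp BL) Θ := by
    have h := (ctCLM (Fin N_R) (Fin N_T)).hasFDerivAt.comp Θ hHd
    exact h
  have h3 := h1.matmul h2
  have h4 := h3.const_smul ((η⁻¹ : ℂ))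
  have h5 := h4.const_add 1
  have hpsd : ((η⁻¹ : ℂ) • (H Θ * Q * (H Θ)ᴴ)).PosSemidef := by
    have hbase := hQ.mul_mul_conjTranspose_same (H Θ)
    have h := psd_smul (le_of_lt (inv_pos.2 hη)) hbase
    rwa [Complex.ofReal_inv] at h
  have hMpos : (1 + (η⁻¹ : ℂ) • (H Θ * Q * (H Θ)ᴴ)).PosDef :=
    Matrix.PosDef.one.add_posSemidef hpsd
  set M : Matrix (Fin N_R) (Fin N_R) ℂ := 1 + (η⁻¹ : ℂ) • (H Θ * Q * (H Θ)ᴴ) with hMdef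
  have hd : (0 : ℂ) < M.det := hMpos.det_pos
  have hdre : 0 < M.det.re := by
    rw [Complex.lt_def] at hd; simpa using hd.1
  have hdim : M.det.im = 0 := by
    rw [Complex.lt_def] at hd; simpa using hd.2.symm
  have hu : IsUnit M.det := (ne_of_gt hd).isUnit
  have hdetM := ((hasFDerivAt_det M).restrictScalars ℝ).comp Θ h5
  have hre := Complex.reCLM.hasFDerivAt.comp Θ hdetM
  have hlog := (Real.hasDerivAt_log (ne_of_gt hdre)).comp_hasFDerivAt Θ hre
  refine ⟨_, by rw [hRfun]; exact hlog, ?_⟩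
  intro Δ
  show M.det.re⁻¹ * (Matrix.trace (M.adjugate * ((η : ℂ)⁻¹ •
    (H Θ * Q * (BL Δ)ᴴ + (H Θ * (0 : Matrix (Fin N_T) (Fin N_T) ℂ) + BL Δ * Q) * (H Θ)ᴴ)))).re = _
  simp only [ContinuousLinearMap.coe_smul', Pi.smul_apply, ContinuousLinearMap.coe_comp',
    Function.comp_apply, ContinuousLinearMap.coe_restrictScalars', detDeriv_apply,
    Complex.reCLM_apply, ContinuousLinearMap.smul_apply, ContinuousLinearMap.prod_apply,
    matmul_deriv_apply, ContinuousLinearMap.zero_apply, Matrix.mul_zero, zero_add,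
    Matrix.zero_mul, add_zero, ctCLM_apply, smul_eq_mul]
  rw [hBLapply]
  have hQH : Qᴴ = Q := hQ.1
  have hMinvH : M⁻¹ᴴ = M⁻¹ := by
    rw [Matrix.conjTranspose_nonsing_inv, hMpos.1]
  have hadj : M.adjugate = M.det • M⁻¹ := by
    rw [M.nonsing_inv_apply hu, smul_smul, IsUnit.mul_val_inv, one_smul]
  set X : Matrix (Fin N_R) (Fin N_T) ℂ := H_B * Δ * H_F with hX
  set A : Matrix (Fin N_R) (Fin N_T) ℂ := H Θ with hA
  have key : (M.adjugate * ((η : ℂ)⁻¹ • (A * Q * Xᴴ + X * Q * Aᴴ))).trace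
      = M.det * ((η : ℂ)⁻¹ * ((M⁻¹ * (A * Q * Xᴴ)).trace + (M⁻¹ * (X * Q * Aᴴ)).trace)) := by
    rw [hadj, Matrix.smul_mul, Matrix.mul_smul, Matrix.mul_add, Matrix.trace_smul,
      Matrix.trace_smul, Matrix.trace_add, smul_eq_mul, smul_eq_mul]
  rw [key]
  have ht1 : (M⁻¹ * (X * Q * Aᴴ)).trace = star ((M⁻¹ * (A * Q * Xᴴ)).trace) := by
    rw [← Matrix.trace_conjTranspose, Matrix.conjTranspose_mul, Matrix.trace_mul_comm]
    congr 1
    simp only [Matrix.conjTranspose_mul, Matrix.conjTranspose_conjTranspose, hMinvH, hQH,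
      Matrix.mul_assoc]
  have ht2 : (M⁻¹ * (A * Q * Xᴴ)).trace
      = (Δᴴ * (H_Bᴴ * M⁻¹ * A * Q * H_Fᴴ)).trace := by
    have e1 : M⁻¹ * (A * Q * Xᴴ) = (M⁻¹ * (A * (Q * H_Fᴴ))) * (Δᴴ * H_Bᴴ) := by
      rw [hX]
      simp only [Matrix.conjTranspose_mul, Matrix.mul_assoc]
    rw [e1, Matrix.trace_mul_comm]
    congr 1
    simp only [Matrix.mul_assoc]
  rw [ht1, ht2]
  set T : ℂ := (Δᴴ * (H_Bᴴ * M⁻¹ * A * Q * H_Fᴴ)).trace with hT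
  have hsum : T + star T = ((2 * T.re : ℝ) : ℂ) := by
    rw [Complex.star_def, Complex.add_conj]
  rw [hsum]
  have hre2 : (M.det * ((η : ℂ)⁻¹ * ((2 * T.re : ℝ) : ℂ))).re
      = M.det.re * (η⁻¹ * (2 * T.re)) := by
    rw [← Complex.ofReal_inv, ← Complex.ofReal_mul]
    simp [Complex.mul_re, hdim]
  rw [hre2]
  field_simp
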